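/- Let W be a finite-dimensional smooth representation of B(ℤ_p) over F with dim_F W ≥ 2. Assume the space of U(ℤ_p)-invariants W^{U(ℤ_p)} is one-dimensional and that T(ℤ_p) acts on it by the character χ. Then the space of U(ℤ_p)-invariants (Sym¹F² ⊗_F W)^{U(ℤ_p)} is two-dimensional and is isomorphic as a representation of T(ℤ_p) to the direct sum of the two characters χ·χ_{1,0} and χ·χ_{1,0}^s. -/

import Mathlib

open TensorProduct

section Setup

variable (p : ℕ) [Fact p.Prime]

/-- `K = GL₂(ℤ_p)`. -/
abbrev GL2 := Matrix.GeneralLinearGroup (Fin 2) ℤ_[p]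

/-- `B(ℤ_p)`: the subgroup of upper triangular matrices in `GL₂(ℤ_p)`. -/
def Bsub : Subgroup (GL2 p) where
  carrier := {g | (g : Matrix (Fin 2) (Fin 2) ℤ_[p]) 1 0 = 0}
  one_mem' := by
    show ((1 : GL2 p) : Matrix (Fin 2) (Fin 2) ℤ_[p]) 1 0 = 0
    rw [Units.val_one]
    simp [Matrix.one_apply]
  mul_mem' := by
    intro a b ha hb
    simp only [Set.mem_setOf_eq] at ha hb ⊢
    show ((a * b : GL2 p) : Matrix (Fin 2) (Fin 2) ℤ_[p]) 1 0 = 0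
    rw [Units.val_mul, Matrix.mul_apply, Fin.sum_univ_two]
    simp [ha, hb]
  inv_mem' := by
    intro g hg
    simp only [Set.mem_setOf_eq] at hg ⊢
    show ((g⁻¹ : GL2 p) : Matrix (Fin 2) (Fin 2) ℤ_[p]) 1 0 = 0
    rw [Matrix.coe_units_inv, Matrix.inv_def]
    simp [Matrix.adjugate_fin_two, hg]

/-- `U(ℤ_p)`: the upper triangular unipotent subgroup, as a subgroup of `B(ℤ_p)`. -/
def Usub : Subgroup ↥(Bsub p) where
  carrier := {g | ((g : GL2 p) : Matrix (Fin 2) (Fin 2) ℤ_[p]) 0 0 = 1 ∧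
                  ((g : GL2 p) : Matrix (Fin 2) (Fin 2) ℤ_[p]) 1 1 = 1}
  one_mem' := by
    constructor <;>
    · show ((1 : GL2 p) : Matrix (Fin 2) (Fin 2) ℤ_[p]) _ _ = 1
      rw [Units.val_one]
      simp [Matrix.one_apply]
  mul_mem' := by
    intro a b ha hb
    simp only [Set.mem_setOf_eq] at ha hb ⊢
    have hb10 : ((b : GL2 p) : Matrix (Fin 2) (Fin 2) ℤ_[p]) 1 0 = 0 := b.2
    have ha10 : ((a : GL2 p) : Matrix (Fin 2) (Fin 2) ℤ_[p]) 1 0 = 0 := a.2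
    constructor <;>
    · show (((a * b : ↥(Bsub p)) : GL2 p) : Matrix (Fin 2) (Fin 2) ℤ_[p]) _ _ = 1
      rw [show ((a * b : ↥(Bsub p)) : GL2 p) = (a : GL2 p) * (b : GL2 p) from rfl]
      rw [Units.val_mul, Matrix.mul_apply, Fin.sum_univ_two]
      simp [ha.1, ha.2, hb.1, hb.2, hb10, ha10]
  inv_mem' := by
    intro g hg
    simp only [Set.mem_setOf_eq] at hg ⊢
    have hg10 : ((g : GL2 p) : Matrix (Fin 2) (Fin 2) ℤ_[p]) 1 0 = 0 := g.2
    have hco : ((g⁻¹ : ↥(Bsub p)) : GL2 p) = (g : GL2 p)⁻¹ := rfl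
    constructor <;>
    · show (((g⁻¹ : ↥(Bsub p)) : GL2 p) : Matrix (Fin 2) (Fin 2) ℤ_[p]) _ _ = 1
      rw [hco, Matrix.coe_units_inv, Matrix.inv_def]
      simp [Matrix.adjugate_fin_two, Matrix.det_fin_two, hg.1, hg.2, hg10]

/-- `T(ℤ_p)`: the diagonal torus, as a subgroup of `B(ℤ_p)`. -/
def Tsub : Subgroup ↥(Bsub p) where
  carrier := {g | ((g : GL2 p) : Matrix (Fin 2) (Fin 2) ℤ_[p]) 0 1 = 0}
  one_mem' := by
    show ((1 : GL2 p) : Matrix (Fin 2) (Fin 2) ℤ_[p]) 0 1 = 0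
    rw [Units.val_one]
    simp [Matrix.one_apply]
  mul_mem' := by
    intro a b ha hb
    simp only [Set.mem_setOf_eq] at ha hb ⊢
    show (((a * b : ↥(Bsub p)) : GL2 p) : Matrix (Fin 2) (Fin 2) ℤ_[p]) 0 1 = 0
    rw [show ((a * b : ↥(Bsub p)) : GL2 p) = (a : GL2 p) * (b : GL2 p) from rfl]
    rw [Units.val_mul, Matrix.mul_apply, Fin.sum_univ_two]
    simp [ha, hb]
  inv_mem' := by
    intro g hg
    simp only [Set.mem_setOf_eq] at hg ⊢
    show (((g⁻¹ : ↥(Bsub p)) : GL2 p) : Matrix (Fin 2) (Fin 2) ℤ_[p]) 0 1 = 0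
    rw [show ((g⁻¹ : ↥(Bsub p)) : GL2 p) = (g : GL2 p)⁻¹ from rfl,
      Matrix.coe_units_inv, Matrix.inv_def]
    simp [Matrix.adjugate_fin_two, hg]

variable (F : Type*) [Field F] [CharP F p]

/-- The reduction map `ℤ_p → 𝔽_p ⊆ F` ("bar"). -/
noncomputable def red : ℤ_[p] →+* F :=
  (ZMod.castHom dvd_rfl F).comp PadicInt.toZMod

/-- `Sym¹F²`: the representation of `K = GL₂(ℤ_p)` on `F² = FX ⊕ FY` obtained by
reducing the matrix entries modulo `p` (`X`, `Y` being the standard basis vectors). -/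
noncomputable def sym1Rep : Representation F (GL2 p) (Fin 2 → F) where
  toFun g := Matrix.toLin' ((g : Matrix (Fin 2) (Fin 2) ℤ_[p]).map (red p F))
  map_one' := by
    show Matrix.toLin' (((1 : GL2 p) :
        Matrix (Fin 2) (Fin 2) ℤ_[p]).map (red p F)) = 1
    rw [Units.val_one, Matrix.map_one _ (map_zero _) (map_one _), Matrix.toLin'_one]
    rfl
  map_mul' := by
    intro g h
    show Matrix.toLin' (((g * h : GL2 p) :
        Matrix (Fin 2) (Fin 2) ℤ_[p]).map (red p F)) = _
    rw [Units.val_mul, Matrix.map_mul, Matrix.toLin'_mul]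
    rfl

/-- The `(i,j)`-entry of an element of `T(ℤ_p)` (or `B(ℤ_p)`). -/
def tentry (t : ↥(Tsub p)) (i j : Fin 2) : ℤ_[p] :=
  (((t : ↥(Bsub p)) : GL2 p) : Matrix (Fin 2) (Fin 2) ℤ_[p]) i j

end Setup

/-- The `B(ℤ_p)`-representation `Sym¹F² ⊗_F W`. -/
noncomputable def symTensor (p : ℕ) [Fact p.Prime] (F : Type*) [Field F] [CharP F p]
    {W : Type*} [AddCommGroup W] [Module F W] (ρ : Representation F ↥(Bsub p) W) :
    Representation F ↥(Bsub p) ((Fin 2 → F) ⊗[F] W) :=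
  Representation.tprod ((sym1Rep p F).comp (Bsub p).subtype) ρ

namespace S4aux

open Matrix

variable (p : ℕ) [Fact p.Prime]

/-- The unipotent matrix `(1 x; 0 1)` as an element of `GL2`. -/
noncomputable def uMat (x : ℤ_[p]) : GL2 p where
  val := !![1, x; 0, 1]
  inv := !![1, -x; 0, 1]
  val_inv := by
    ext i j
    fin_cases i <;> fin_cases j <;>
      simp [Matrix.mul_apply, Fin.sum_univ_two, Matrix.one_apply]
  inv_val := by
    ext i j
    fin_cases i <;> fin_cases j <;>
      simp [Matrix.mul_apply, Fin.sum_univ_two, Matrix.one_apply]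

@[simp] lemma uMat_val (x : ℤ_[p]) :
    ((uMat p x : GL2 p) : Matrix (Fin 2) (Fin 2) ℤ_[p]) = !![1, x; 0, 1] := rfl

/-- The unipotent matrix as an element of `B`. -/
noncomputable def uB (x : ℤ_[p]) : ↥(Bsub p) :=
  ⟨uMat p x, by show ((uMat p x : GL2 p) : Matrix (Fin 2) (Fin 2) ℤ_[p]) 1 0 = 0; simp⟩

@[simp] lemma uB_val (x : ℤ_[p]) :
    (((uB p x : ↥(Bsub p)) : GL2 p) : Matrix (Fin 2) (Fin 2) ℤ_[p]) = !![1, x; 0, 1] := rfl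

lemma uB_zero : uB p 0 = 1 := by
  apply Subtype.ext
  apply Units.ext
  show (!![1, (0:ℤ_[p]); 0, 1]) = _
  ext i j
  fin_cases i <;> fin_cases j <;> simp [Matrix.one_apply]

lemma uB_add (x y : ℤ_[p]) : uB p (x + y) = uB p x * uB p y := by
  apply Subtype.ext
  apply Units.ext
  show (!![1, x + y; 0, 1]) = !![1, x; 0, 1] * !![1, y; 0, 1]
  ext i j
  fin_cases i <;> fin_cases j <;> simp [Matrix.mul_apply, Fin.sum_univ_two, add_comm]

lemma uB_mem (x : ℤ_[p]) : uB p x ∈ Usub p := by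
  constructor <;> simp

lemma uB_neg (x : ℤ_[p]) : uB p (-x) = (uB p x)⁻¹ := by
  rw [eq_inv_iff_mul_eq_one, ← uB_add, neg_add_cancel, uB_zero]

lemma uB_natmul (n : ℕ) (x : ℤ_[p]) : uB p x ^ n = uB p ((n : ℤ_[p]) * x) := by
  induction n with
  | zero => simp [uB_zero]
  | succ n ih =>
      rw [pow_succ, ih, ← uB_add]
      congr 1
      push_cast
      ring

/-- Every element of `Usub` is of the form `uB x`. -/
lemma usub_eq (g : ↥(Usub p)) :
    (g : ↥(Bsub p)) = uB p ((((g : ↥(Bsub p)) : GL2 p) : Matrix (Fin 2) (Fin 2) ℤ_[p]) 0 1) := by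
  apply Subtype.ext
  apply Units.ext
  have h00 : (((g : ↥(Bsub p)) : GL2 p) : Matrix (Fin 2) (Fin 2) ℤ_[p]) 0 0 = 1 := g.2.1
  have h11 : (((g : ↥(Bsub p)) : GL2 p) : Matrix (Fin 2) (Fin 2) ℤ_[p]) 1 1 = 1 := g.2.2
  have h10 : (((g : ↥(Bsub p)) : GL2 p) : Matrix (Fin 2) (Fin 2) ℤ_[p]) 1 0 = 0 :=
    (g : ↥(Bsub p)).2
  ext i j
  fin_cases i <;> fin_cases j <;> simp [h00, h11, h10]

section Torus

lemma t01 (t : ↥(Tsub p)) : tentry p t 0 1 = 0 := t.2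

lemma t10 (t : ↥(Tsub p)) : tentry p t 1 0 = 0 := (t : ↥(Bsub p)).2

lemma tmat (t : ↥(Tsub p)) :
    (((t : ↥(Bsub p)) : GL2 p) : Matrix (Fin 2) (Fin 2) ℤ_[p]) =
      !![tentry p t 0 0, 0; 0, tentry p t 1 1] := by
  have h1 := t01 p t
  have h2 := t10 p t
  ext i j
  fin_cases i <;> fin_cases j <;>
    simp only [tentry] at * <;> simp [h1, h2]

lemma isUnit_det_t (t : ↥(Tsub p)) :
    IsUnit (tentry p t 0 0 * tentry p t 1 1) := by
  have h : IsUnit ((((t : ↥(Bsub p)) : GL2 p) : Matrix (Fin 2) (Fin 2) ℤ_[p])) :=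
    Units.isUnit ((t : ↥(Bsub p)) : GL2 p)
  rw [Matrix.isUnit_iff_isUnit_det, tmat, Matrix.det_fin_two] at h
  simpa using h

lemma isUnit_t00 (t : ↥(Tsub p)) : IsUnit (tentry p t 0 0) :=
  isUnit_of_mul_isUnit_left (isUnit_det_t p t)

lemma isUnit_t11 (t : ↥(Tsub p)) : IsUnit (tentry p t 1 1) :=
  isUnit_of_mul_isUnit_left (mul_comm (tentry p t 0 0) _ ▸ isUnit_det_t p t)

lemma u_t_comm (t : ↥(Tsub p)) (x y : ℤ_[p])
    (h : tentry p t 0 0 * y = x * tentry p t 1 1) :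
    uB p x * (t : ↥(Bsub p)) = (t : ↥(Bsub p)) * uB p y := by
  apply Subtype.ext
  apply Units.ext
  show ((uB p x : ↥(Bsub p)) : GL2 p).val * _ = ((t : ↥(Bsub p)) : GL2 p).val * _
  rw [show (((uB p x : ↥(Bsub p)) : GL2 p) : Matrix (Fin 2) (Fin 2) ℤ_[p]) =
    !![1, x; 0, 1] from rfl,
    show (((uB p y : ↥(Bsub p)) : GL2 p) : Matrix (Fin 2) (Fin 2) ℤ_[p]) =
    !![1, y; 0, 1] from rfl, tmat]
  ext i j
  fin_cases i <;> fin_cases j <;>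
    simp [Matrix.mul_apply, Fin.sum_univ_two, h, mul_comm]

lemma t_t_comm (s t : ↥(Tsub p)) :
    (s : ↥(Bsub p)) * (t : ↥(Bsub p)) = (t : ↥(Bsub p)) * (s : ↥(Bsub p)) := by
  apply Subtype.ext
  apply Units.ext
  show ((s : ↥(Bsub p)) : GL2 p).val * _ = ((t : ↥(Bsub p)) : GL2 p).val * _
  rw [tmat p s, tmat p t]
  ext i j
  fin_cases i <;> fin_cases j <;>
    simp [Matrix.mul_apply, Fin.sum_univ_two, mul_comm]

lemma isUnit_two (hp5 : 5 ≤ p) : IsUnit (2 : ℤ_[p]) := by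
  rw [PadicInt.isUnit_iff]
  refine le_antisymm (PadicInt.norm_le_one _) ?_
  by_contra hlt
  push_neg at hlt
  have h2 : ((2 : ℤ) : ℤ_[p]) = (2 : ℤ_[p]) := by push_cast; ring
  rw [← h2, PadicInt.norm_int_lt_one_iff_dvd] at hlt
  have := Int.le_of_dvd (by norm_num) hlt
  omega

/-- The diagonal torus element `diag(1, 2)`. -/
noncomputable def t0 (h : IsUnit (2 : ℤ_[p])) : ↥(Tsub p) := by
  have hmul : (2 : ℤ_[p]) * ↑h.unit⁻¹ = 1 := by
    have := Units.mul_inv h.unit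
    rwa [h.unit_spec] at this
  have hmul' : (↑h.unit⁻¹ : ℤ_[p]) * 2 = 1 := by
    have := Units.inv_mul h.unit
    rwa [h.unit_spec] at this
  refine ⟨⟨⟨!![1, 0; 0, 2], !![1, 0; 0, ↑h.unit⁻¹], ?_, ?_⟩, ?_⟩, ?_⟩
  · ext i j
    fin_cases i <;> fin_cases j <;>
      simp [Matrix.mul_apply, Fin.sum_univ_two, Matrix.one_apply, hmul]
  · ext i j
    fin_cases i <;> fin_cases j <;>
      simp [Matrix.mul_apply, Fin.sum_univ_two, Matrix.one_apply, hmul']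
  · show (!![1, 0; 0, (2:ℤ_[p])] : Matrix (Fin 2) (Fin 2) ℤ_[p]) 1 0 = 0
    simp
  · show (!![1, 0; 0, (2:ℤ_[p])] : Matrix (Fin 2) (Fin 2) ℤ_[p]) 0 1 = 0
    simp

lemma t0_00 (h : IsUnit (2 : ℤ_[p])) : tentry p (t0 p h) 0 0 = 1 := by
  show (!![1, 0; 0, (2:ℤ_[p])] : Matrix (Fin 2) (Fin 2) ℤ_[p]) 0 0 = 1
  simp

lemma t0_11 (h : IsUnit (2 : ℤ_[p])) : tentry p (t0 p h) 1 1 = 2 := by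
  show (!![1, 0; 0, (2:ℤ_[p])] : Matrix (Fin 2) (Fin 2) ℤ_[p]) 1 1 = 2
  simp

end Torus

section Sym

variable (F : Type*) [Field F] [CharP F p]

/-- Standard basis vector. -/
noncomputable def E (i : Fin 2) : Fin 2 → F := Pi.single i 1

lemma sym1_apply (g : GL2 p) (f : Fin 2 → F) :
    sym1Rep p F g f = ((g : Matrix (Fin 2) (Fin 2) ℤ_[p]).map (red p F)).mulVec f := by
  show Matrix.toLin' _ f = _
  rw [Matrix.toLin'_apply]

lemma sym1_E (g : GL2 p) (j : Fin 2) :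
    sym1Rep p F g (E F j) =
      fun i => red p F ((g : Matrix (Fin 2) (Fin 2) ℤ_[p]) i j) := by
  rw [sym1_apply, E, Matrix.mulVec_single]
  funext i
  simp [Matrix.map_apply]

lemma sym1_u_E0 (x : ℤ_[p]) : sym1Rep p F (uMat p x) (E F 0) = E F 0 := by
  rw [sym1_E]
  funext i
  fin_cases i <;> simp [E]

lemma sym1_u_E1 (x : ℤ_[p]) :
    sym1Rep p F (uMat p x) (E F 1) = red p F x • E F 0 + E F 1 := by
  rw [sym1_E]
  funext i
  fin_cases i <;> simp [E]

lemma sym1_t_E0 (t : ↥(Tsub p)) :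
    sym1Rep p F (((t : ↥(Bsub p)) : GL2 p)) (E F 0) =
      red p F (tentry p t 0 0) • E F 0 := by
  rw [sym1_E, tmat]
  funext i
  fin_cases i <;> simp [E]

lemma sym1_t_E1 (t : ↥(Tsub p)) :
    sym1Rep p F (((t : ↥(Bsub p)) : GL2 p)) (E F 1) =
      red p F (tentry p t 1 1) • E F 1 := by
  rw [sym1_E, tmat]
  funext i
  fin_cases i <;> simp [E]

variable {W : Type*} [AddCommGroup W] [Module F W]

/-- Projection onto the `i`-th component of `(Fin 2 → F) ⊗ W ≅ W ⊕ W`. -/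
noncomputable def proj (i : Fin 2) : (Fin 2 → F) ⊗[F] W →ₗ[F] W :=
  (TensorProduct.lid F W).toLinearMap ∘ₗ LinearMap.rTensor W (LinearMap.proj i)

@[simp] lemma proj_tmul (i : Fin 2) (f : Fin 2 → F) (w : W) :
    proj F i (f ⊗ₜ[F] w) = f i • w := by
  simp [proj]

@[simp] lemma E00 : E F 0 0 = 1 := by simp [E]

@[simp] lemma E01 : E F 0 1 = 0 := by simp [E]

@[simp] lemma E10 : E F 1 0 = 0 := by simp [E]

@[simp] lemma E11 : E F 1 1 = 1 := by simp [E]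

lemma smulE_tmul_smul {W : Type*} [AddCommGroup W] [Module F W] (r s : F)
    (f : Fin 2 → F) (w : W) :
    (r • f) ⊗ₜ[F] (s • w) = (s * r) • (f ⊗ₜ[F] w) := by
  rw [← TensorProduct.smul_tmul', TensorProduct.tmul_smul, smul_smul, mul_comm r s]

@[simp] lemma proj00 (w : W) : proj F 0 (E F 0 ⊗ₜ[F] w) = w := by simp [E]

@[simp] lemma proj01 (w : W) : proj F 0 (E F 1 ⊗ₜ[F] w) = 0 := by simp [E]

@[simp] lemma proj10 (w : W) : proj F 1 (E F 0 ⊗ₜ[F] w) = 0 := by simp [E]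

@[simp] lemma proj11 (w : W) : proj F 1 (E F 1 ⊗ₜ[F] w) = w := by simp [E]

lemma sum_proj (v : (Fin 2 → F) ⊗[F] W) :
    (E F 0) ⊗ₜ[F] proj F 0 v + (E F 1) ⊗ₜ[F] proj F 1 v = v := by
  have h : ((TensorProduct.mk F (Fin 2 → F) W (E F 0)) ∘ₗ proj F 0
      + (TensorProduct.mk F (Fin 2 → F) W (E F 1)) ∘ₗ proj F 1)
      = (LinearMap.id : (Fin 2 → F) ⊗[F] W →ₗ[F] _) := by
    apply TensorProduct.ext'
    intro f w
    have hf : f = f 0 • E F 0 + f 1 • E F 1 := by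
      funext i; fin_cases i <;> simp [E]
    simp only [LinearMap.add_apply, LinearMap.comp_apply, proj_tmul,
      TensorProduct.mk_apply, LinearMap.id_apply]
    rw [TensorProduct.tmul_smul, TensorProduct.tmul_smul, TensorProduct.smul_tmul',
      TensorProduct.smul_tmul', ← TensorProduct.add_tmul, ← hf]
  have := LinearMap.congr_fun h v
  simpa using this

lemma symTensor_tmul (ρ : Representation F ↥(Bsub p) W) (b : ↥(Bsub p))
    (f : Fin 2 → F) (w : W) :
    symTensor p F ρ b (f ⊗ₜ[F] w) = (sym1Rep p F (b : GL2 p) f) ⊗ₜ[F] (ρ b w) := rfl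

end Sym

section Topology

lemma continuous_uB : Continuous (fun x : ℤ_[p] => uB p x) := by
  apply Continuous.subtype_mk
  rw [Units.continuous_iff]
  constructor
  · apply continuous_matrix
    intro i j
    fin_cases i <;> fin_cases j <;>
      · simp only [uMat]
        first
          | exact continuous_const
          | exact continuous_id
          | (simp; first | exact continuous_const | exact continuous_id | exact continuous_neg)
  · apply continuous_matrix
    intro i j
    fin_cases i <;> fin_cases j <;>
      · simp only [uMat]
        first
          | exact continuous_const
          | exact continuous_id
          | (simp; first | exact continuous_const | exact continuous_id | exact continuous_neg)

lemma addSubgroup_eq_top (S : AddSubgroup ℤ_[p]) (hopen : IsOpen (S : Set ℤ_[p]))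
    (h1 : (1 : ℤ_[p]) ∈ S) : ∀ x : ℤ_[p], x ∈ S := by
  have hclosed : IsClosed (S : Set ℤ_[p]) := AddSubgroup.isClosed_of_isOpen S hopen
  intro x
  have hsub : Set.range (Nat.cast : ℕ → ℤ_[p]) ⊆ (S : Set ℤ_[p]) := by
    rintro _ ⟨n, rfl⟩
    have hn : (n • (1 : ℤ_[p])) ∈ S := AddSubgroup.nsmul_mem S h1 n
    simpa using hn
  have hcl : closure (Set.range (Nat.cast : ℕ → ℤ_[p])) ⊆ (S : Set ℤ_[p]) :=
    hclosed.closure_subset_iff.mpr hsub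
  exact hcl (by rw [PadicInt.denseRange_natCast.closure_range]; trivial)

variable (F : Type*) [Field F] [CharP F p]

lemma red_eq_zero_of_norm_lt_one (h : ℤ_[p]) (hn : ‖h‖ < 1) : red p F h = 0 := by
  have h0 : PadicInt.toZMod h = 0 := by
    rw [← RingHom.mem_ker, PadicInt.ker_toZMod, PadicInt.maximalIdeal_eq_span_p,
      Ideal.mem_span_singleton, ← PadicInt.norm_lt_one_iff_dvd]
    exact hn
  show (ZMod.castHom dvd_rfl F) (PadicInt.toZMod h) = 0
  rw [h0, _root_.map_zero]

lemma red_ne_zero_of_isUnit (x : ℤ_[p]) (hx : IsUnit x) : red p F x ≠ 0 := by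
  have hz : IsUnit (PadicInt.toZMod x) := hx.map PadicInt.toZMod
  intro hcon
  have : PadicInt.toZMod x = 0 := by
    apply (ZMod.castHom dvd_rfl F).injective
    rw [_root_.map_zero]
    exact hcon
  exact hz.ne_zero this

variable {W : Type*} [AddCommGroup W] [Module F W]

/-- The key smoothness consequence: a twisted invariance relation that holds for
`uB 1` holds for all `uB x`. -/
lemma fix_all (ρ : Representation F ↥(Bsub p) W)
    (hsmooth : ∀ w : W, IsOpen {b : ↥(Bsub p) | ρ b w = w})
    (w v : W) (hw : ∀ x : ℤ_[p], ρ (uB p x) w = w)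
    (h1 : ρ (uB p 1) v = v - w) :
    ∀ x : ℤ_[p], ρ (uB p x) v = v - red p F x • w := by
  have hmul : ∀ x y : ℤ_[p], ρ (uB p (x + y)) v = ρ (uB p x) (ρ (uB p y) v) := by
    intro x y
    rw [uB_add, _root_.map_mul]
    rfl
  let S : AddSubgroup ℤ_[p] :=
  { carrier := {x | ρ (uB p x) v = v - red p F x • w}
    zero_mem' := by
      show ρ (uB p 0) v = v - red p F 0 • w
      rw [uB_zero, _root_.map_one, _root_.map_zero]
      simp
    add_mem' := by
      intro x y hx hy
      show ρ (uB p (x + y)) v = v - red p F (x + y) • w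
      rw [hmul, hy, _root_.map_sub, hx, LinearMap.map_smul, hw, _root_.map_add, add_smul]
      abel
    neg_mem' := by
      intro x hx
      show ρ (uB p (-x)) v = v - red p F (-x) • w
      have hx' : ρ (uB p x) v = v - red p F x • w := hx
      have h2 : ρ (uB p (-x)) (ρ (uB p x) v) = v := by
        rw [← hmul, neg_add_cancel, uB_zero, _root_.map_one]
        rfl
      rw [hx', _root_.map_sub, LinearMap.map_smul, hw] at h2
      rw [_root_.map_neg, neg_smul, sub_neg_eq_add]
      linear_combination (norm := module) h2 }
  have hopen : IsOpen (S : Set ℤ_[p]) := by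
    rw [isOpen_iff_mem_nhds]
    intro x₀ hx₀
    set V : Set ℤ_[p] := {h | ρ (uB p h) v = v} ∩ {h | ‖h‖ < 1} with hV
    have hVopen : IsOpen V := by
      apply IsOpen.inter
      · exact IsOpen.preimage (continuous_uB p) (hsmooth v)
      · exact isOpen_lt continuous_norm continuous_const
    have h0V : (0 : ℤ_[p]) ∈ V := by
      constructor
      · show ρ (uB p 0) v = v
        rw [uB_zero, _root_.map_one]
        rfl
      · show ‖(0 : ℤ_[p])‖ < 1
        simp
    rw [mem_nhds_iff]
    refine ⟨(fun h => x₀ + h) '' V, ?_, ?_, ⟨0, h0V, by simp⟩⟩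
    · rintro _ ⟨h, ⟨hfix, hnorm⟩, rfl⟩
      show ρ (uB p (x₀ + h)) v = v - red p F (x₀ + h) • w
      rw [hmul, hfix, _root_.map_add, red_eq_zero_of_norm_lt_one p F h hnorm, add_zero]
      exact hx₀
    · exact (Homeomorph.addLeft x₀).isOpen_image.mpr hVopen
  exact addSubgroup_eq_top p S hopen (by
    show ρ (uB p 1) v = v - red p F 1 • w
    rw [_root_.map_one, one_smul]
    exact h1)

lemma exists_pow_fix (ρ : Representation F ↥(Bsub p) W)
    (hsmooth : ∀ w : W, IsOpen {b : ↥(Bsub p) | ρ b w = w})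
    [FiniteDimensional F W] :
    ∃ n : ℕ, ∀ w : W, ρ (uB p ((p : ℤ_[p]) ^ n)) w = w := by
  classical
  let b := Module.finBasis F W
  have hopen : IsOpen (⋂ i, {x : ℤ_[p] | ρ (uB p x) (b i) = b i}) := by
    apply isOpen_iInter_of_finite
    intro i
    exact IsOpen.preimage (continuous_uB p) (hsmooth (b i))
  have h0 : (0 : ℤ_[p]) ∈ ⋂ i, {x : ℤ_[p] | ρ (uB p x) (b i) = b i} := by
    apply Set.mem_iInter.mpr
    intro i
    show ρ (uB p 0) (b i) = b i
    rw [uB_zero, _root_.map_one]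
    rfl
  obtain ⟨ε, hε, hball⟩ := Metric.isOpen_iff.mp hopen 0 h0
  have hp1 : (1 : ℝ) < (p : ℝ) := by
    have := (Fact.out : p.Prime).two_le
    exact_mod_cast Nat.lt_of_lt_of_le Nat.one_lt_two this
  obtain ⟨n, hn⟩ := exists_pow_lt_of_lt_one hε (by
    rw [inv_lt_one_iff₀]; right; exact hp1 : (p : ℝ)⁻¹ < 1)
  have hmem : ((p : ℤ_[p]) ^ n) ∈ ⋂ i, {x : ℤ_[p] | ρ (uB p x) (b i) = b i} := by
    apply hball
    rw [Metric.mem_ball, dist_zero_right]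
    calc ‖(p : ℤ_[p]) ^ n‖ = ‖(p : ℤ_[p])‖ ^ n := by rw [norm_pow]
    _ = ((p : ℝ)⁻¹) ^ n := by rw [PadicInt.norm_p]
    _ < ε := hn
  refine ⟨n, ?_⟩
  have heq : (ρ (uB p ((p : ℤ_[p]) ^ n)) : W →ₗ[F] W) = LinearMap.id := by
    apply b.ext
    intro i
    have := Set.mem_iInter.mp hmem i
    exact this
  intro w
  have := LinearMap.congr_fun heq w
  simpa using this

end Topology

end S4aux

open S4aux
set_option maxHeartbeats 1000000 in
theorem statement4 (p : ℕ) [Fact p.Prime] (hp : 5 ≤ p)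
    (F : Type*) [Field F] [CharP F p]
    {W : Type*} [AddCommGroup W] [Module F W]
    (ρ : Representation F ↥(Bsub p) W)
    (hsmooth : ∀ w : W, IsOpen {b : ↥(Bsub p) | ρ b w = w})
    [FiniteDimensional F W] (hdim : 2 ≤ Module.finrank F W)
    (hinv1 : Module.finrank F
      ↥(Representation.invariants (ρ.comp (Usub p).subtype)) = 1)
    (χ : ↥(Tsub p) →* Fˣ)
    (hχ : ∀ t : ↥(Tsub p),
      ∀ w ∈ Representation.invariants (ρ.comp (Usub p).subtype),
      ρ (t : ↥(Bsub p)) w = (χ t : F) • w) :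
    Module.finrank F
      ↥(Representation.invariants ((symTensor p F ρ).comp (Usub p).subtype)) = 2 ∧
    ∃ v₁ v₂ : (Fin 2 → F) ⊗[F] W,
      v₁ ∈ Representation.invariants ((symTensor p F ρ).comp (Usub p).subtype) ∧
      v₂ ∈ Representation.invariants ((symTensor p F ρ).comp (Usub p).subtype) ∧
      v₁ ≠ 0 ∧ v₂ ≠ 0 ∧
      Representation.invariants ((symTensor p F ρ).comp (Usub p).subtype) =
        Submodule.span F {v₁, v₂} ∧
      (∀ t : ↥(Tsub p),
        symTensor p F ρ (t : ↥(Bsub p)) v₁ =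
          ((χ t : F) * red p F (tentry p t 0 0)) • v₁) ∧
      (∀ t : ↥(Tsub p),
        symTensor p F ρ (t : ↥(Bsub p)) v₂ =
          ((χ t : F) * red p F (tentry p t 1 1)) • v₂) := by
  
  classical
  -- Notation
  set I := Representation.invariants (ρ.comp (Usub p).subtype) with hI
  have memI : ∀ z : W, z ∈ I ↔ ∀ x : ℤ_[p], ρ (uB p x) z = z := by
    intro z
    constructor
    · intro hz x
      exact hz ⟨uB p x, uB_mem p x⟩
    · intro hz g
      show ρ ((g : ↥(Bsub p))) z = z
      rw [usub_eq p g]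
      exact hz _
  -- a generator of the invariants
  obtain ⟨w₀', hw₀'ne, hgen⟩ := finrank_eq_one_iff'.mp hinv1
  set w₀ : W := (w₀' : W) with hw₀def
  have w₀mem : w₀ ∈ I := w₀'.2
  have hw₀ne : w₀ ≠ 0 := fun h => hw₀'ne (Subtype.ext h)
  have hgenW : ∀ z ∈ I, ∃ c : F, z = c • w₀ := by
    intro z hz
    obtain ⟨c, hc⟩ := hgen ⟨z, hz⟩
    exact ⟨c, by simpa using (congrArg Subtype.val hc).symm⟩
  have hw₀fix : ∀ x : ℤ_[p], ρ (uB p x) w₀ = w₀ := (memI w₀).mp w₀mem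
  -- fixed by uB 1 implies invariant
  have hker : ∀ z : W, ρ (uB p 1) z = z → z ∈ I := by
    intro z hz
    rw [memI]
    intro x
    have h := fix_all p F ρ hsmooth 0 z (fun y => map_zero _)
      (by rw [sub_zero]; exact hz) x
    simpa using h
  have hfr : 0 < Module.finrank F W := by omega
  haveI : Nontrivial W := (Module.finrank_pos_iff (R := F)).mp hfr
  haveI : Nontrivial (Module.End F W) := by
    obtain ⟨w1, hw1⟩ := exists_ne (0 : W)
    refine ⟨0, 1, fun h => hw1 ?_⟩
    have := LinearMap.congr_fun h w1
    simpa using this.symm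
  haveI : CharP (Module.End F W) p :=
    charP_of_injective_ringHom (algebraMap F (Module.End F W)).injective p
  -- N is nilpotent
  obtain ⟨n, hn⟩ := exists_pow_fix p F ρ hsmooth
  have hA : (ρ (uB p 1)) ^ (p ^ n) = 1 := by
    rw [← _root_.map_pow, uB_natmul]
    have hc : ((p ^ n : ℕ) : ℤ_[p]) * 1 = (p : ℤ_[p]) ^ n := by push_cast; ring
    rw [hc]
    exact LinearMap.ext fun w => hn w
  set N : Module.End F W := ρ (uB p 1) - 1 with hN
  have hNz : ∀ z : W, N z = ρ (uB p 1) z - z := by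
    intro z; rw [hN]; rfl
  have hNker : ∀ z : W, N z = 0 ↔ z ∈ I := by
    intro z
    rw [hNz, sub_eq_zero]
    constructor
    · exact hker z
    · intro hz; exact (memI z).mp hz 1
  have hNnil : N ^ (p ^ n) = 0 := by
    rw [hN, sub_pow_char_pow_of_commute p n (Commute.one_right _), hA, one_pow, sub_self]
  have hNne : N ≠ 0 := by
    intro h0
    have : I = ⊤ := by
      rw [Submodule.eq_top_iff']
      intro z
      rw [← hNker, h0]
      rfl
    rw [this] at hinv1
    rw [finrank_top] at hinv1
    omega
  -- minimal vanishing power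
  have hex : ∃ m, N ^ m = 0 := ⟨p ^ n, hNnil⟩
  set m := Nat.find hex with hm
  have hm0 : N ^ m = 0 := Nat.find_spec hex
  have hmne : m ≠ 0 := by
    intro h
    rw [h, pow_zero] at hm0
    exact one_ne_zero hm0
  have hm1 : m ≠ 1 := by
    intro h
    rw [h, pow_one] at hm0
    exact hNne hm0
  have hk1 : N ^ (m - 1) ≠ 0 := Nat.find_min hex (by omega)
  obtain ⟨z, hz⟩ : ∃ z, (N ^ (m - 1)) z ≠ 0 := by
    by_contra h
    push_neg at h
    exact hk1 (LinearMap.ext fun z => by simpa using h z)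
  have hNNz : N ((N ^ (m - 1)) z) = 0 := by
    have hpow : N ^ m = N * N ^ (m - 1) := by
      conv_lhs => rw [show m = (m - 1) + 1 by omega]
      rw [pow_succ']
    have h := LinearMap.congr_fun hm0 z
    rw [hpow] at h
    simpa [Module.End.mul_apply] using h
  obtain ⟨c, hc⟩ := hgenW _ ((hNker _).mp hNNz)
  have hcne : c ≠ 0 := by
    intro h
    rw [h, zero_smul] at hc
    exact hz hc
  -- the vector v with N v = -w₀
  obtain ⟨v, hNv⟩ : ∃ v : W, N v = -w₀ := by
    refine ⟨(-(c⁻¹)) • ((N ^ (m - 1 - 1)) z), ?_⟩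
    rw [LinearMap.map_smul]
    have : N ((N ^ (m - 1 - 1)) z) = (N ^ (m - 1)) z := by
      rw [← Module.End.mul_apply, ← pow_succ']
      congr 2
      omega
    rw [this, hc, smul_smul, show -c⁻¹ * c = -1 by field_simp]
    exact neg_one_smul F w₀
  have hv1 : ρ (uB p 1) v = v - w₀ := by
    have h2 : ρ (uB p 1) v = v + N v := by
      rw [hNz v]
      abel
    rw [h2, hNv]
    abel
  have hvx : ∀ x : ℤ_[p], ρ (uB p x) v = v - red p F x • w₀ :=
    fix_all p F ρ hsmooth w₀ v hw₀fix hv1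
  -- Torus action on v
  set lam : ↥(Tsub p) → F := fun t =>
    (χ t : F) * (red p F (tentry p t 0 0))⁻¹ * red p F (tentry p t 1 1) with hlam
  have hlamne : ∀ t : ↥(Tsub p), lam t ≠ 0 := by
    intro t
    have hra : red p F (tentry p t 0 0) ≠ 0 :=
      red_ne_zero_of_isUnit p F _ (isUnit_t00 p t)
    have hrd : red p F (tentry p t 1 1) ≠ 0 :=
      red_ne_zero_of_isUnit p F _ (isUnit_t11 p t)
    exact mul_ne_zero (mul_ne_zero (Units.ne_zero (χ t)) (inv_ne_zero hra)) hrd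
  have hTv : ∀ t : ↥(Tsub p), ∃ mu : F,
      ρ ((t : ↥(Bsub p))) v = lam t • v + mu • w₀ := by
    intro t
    have hua := isUnit_t00 p t
    have hra : red p F (tentry p t 0 0) ≠ 0 := red_ne_zero_of_isUnit p F _ hua
    have hrd : red p F (tentry p t 1 1) ≠ 0 :=
      red_ne_zero_of_isUnit p F _ (isUnit_t11 p t)
    have hχt : (χ t : F) ≠ 0 := Units.ne_zero (χ t)
    have hredinv : red p F (↑hua.unit⁻¹ : ℤ_[p]) = (red p F (tentry p t 0 0))⁻¹ := by
      have h2 : red p F (tentry p t 0 0) * red p F (↑hua.unit⁻¹ : ℤ_[p]) = 1 := by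
        rw [← _root_.map_mul, hua.mul_val_inv, _root_.map_one]
      exact eq_inv_of_mul_eq_one_left (by rw [mul_comm] at h2; exact h2)
    have hconj : ∀ x : ℤ_[p], ρ (uB p x) (ρ ((t : ↥(Bsub p))) v)
        = ρ ((t : ↥(Bsub p))) v
          - (red p F x * ((red p F (tentry p t 0 0))⁻¹ * red p F (tentry p t 1 1))
              * (χ t : F)) • w₀ := by
      intro x
      have hay : tentry p t 0 0 * ((↑hua.unit⁻¹ : ℤ_[p]) * (x * tentry p t 1 1))
          = x * tentry p t 1 1 := by
        rw [← mul_assoc, hua.mul_val_inv, one_mul]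
      have hcommute : uB p x * (t : ↥(Bsub p))
          = (t : ↥(Bsub p)) * uB p ((↑hua.unit⁻¹ : ℤ_[p]) * (x * tentry p t 1 1)) :=
        u_t_comm p t x _ hay
      have hswap : ρ (uB p x) (ρ ((t : ↥(Bsub p))) v)
          = ρ ((t : ↥(Bsub p))) (ρ (uB p ((↑hua.unit⁻¹ : ℤ_[p]) * (x * tentry p t 1 1))) v) := by
        rw [← Module.End.mul_apply, ← _root_.map_mul, hcommute, _root_.map_mul,
          Module.End.mul_apply]
      rw [hswap, hvx _, _root_.map_sub, LinearMap.map_smul, hχ t w₀ w₀mem]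
      congr 1
      rw [_root_.map_mul, _root_.map_mul, hredinv, smul_smul]
      congr 1
      ring
    obtain ⟨zt, hztx, hρtv⟩ : ∃ zt : W,
        (∀ x : ℤ_[p], ρ (uB p x) zt = zt - red p F x • w₀)
        ∧ ρ ((t : ↥(Bsub p))) v = lam t • zt := by
      refine ⟨(lam t)⁻¹ • ρ ((t : ↥(Bsub p))) v, ?_, ?_⟩
      · intro x
        rw [LinearMap.map_smul, hconj x, smul_sub, smul_smul]
        congr 2
        rw [hlam]
        field_simp
      · rw [smul_smul, mul_inv_cancel₀ (hlamne t), one_smul]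
    have hmem : zt - v ∈ I := by
      rw [memI]
      intro x
      rw [_root_.map_sub, hztx x, hvx x]
      abel
    obtain ⟨cz, hcz⟩ := hgenW _ hmem
    refine ⟨lam t * cz, ?_⟩
    rw [hρtv, show zt = v + cz • w₀ from by rw [← hcz]; abel]
    module
  choose μ hμ using hTv
  -- the special torus element diag(1,2)
  have h2u : IsUnit (2 : ℤ_[p]) := isUnit_two p hp
  set t₀ := t0 p h2u with ht₀
  have hred2 : red p F (2 : ℤ_[p]) = 2 := by
    rw [show (2 : ℤ_[p]) = 1 + 1 from by norm_num, _root_.map_add, _root_.map_one]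
    norm_num
  have hlamt₀ : lam t₀ = (χ t₀ : F) * 2 := by
    rw [hlam]
    simp only [ht₀, t0_00, t0_11, _root_.map_one, inv_one, mul_one, hred2]
  have hχt₀ : (χ t₀ : F) ≠ 0 := Units.ne_zero (χ t₀)
  have hrel : ∀ t : ↥(Tsub p), μ t * (χ t₀ : F) = μ t₀ * (lam t - (χ t : F)) := by
    intro t
    have hswap : ρ ((t : ↥(Bsub p))) (ρ ((t₀ : ↥(Bsub p))) v)
        = ρ ((t₀ : ↥(Bsub p))) (ρ ((t : ↥(Bsub p))) v) := by
      rw [← Module.End.mul_apply, ← _root_.map_mul, t_t_comm p t t₀, _root_.map_mul,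
        Module.End.mul_apply]
    have e1 : ρ ((t : ↥(Bsub p))) (ρ ((t₀ : ↥(Bsub p))) v)
        = lam t₀ • (lam t • v + μ t • w₀) + μ t₀ • ((χ t : F) • w₀) := by
      rw [hμ t₀, _root_.map_add, LinearMap.map_smul, LinearMap.map_smul, hμ t,
        hχ t w₀ w₀mem]
    have e2 : ρ ((t₀ : ↥(Bsub p))) (ρ ((t : ↥(Bsub p))) v)
        = lam t • (lam t₀ • v + μ t₀ • w₀) + μ t • ((χ t₀ : F) • w₀) := by
      rw [hμ t, _root_.map_add, LinearMap.map_smul, LinearMap.map_smul, hμ t₀,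
        hχ t₀ w₀ w₀mem]
    rw [e1, e2] at hswap
    have hc0 : (lam t₀ * μ t + μ t₀ * (χ t : F)
        - (lam t * μ t₀ + μ t * (χ t₀ : F))) • w₀ = 0 := by
      linear_combination (norm := module) hswap
    rcases smul_eq_zero.mp hc0 with h | h
    · linear_combination h - μ t * hlamt₀
    · exact absurd h hw₀ne
  -- the corrected vector v'
  obtain ⟨v', hv'x, hv'T⟩ : ∃ v' : W,
      (∀ x : ℤ_[p], ρ (uB p x) v' = v' - red p F x • w₀)
      ∧ (∀ t : ↥(Tsub p), ρ ((t : ↥(Bsub p))) v' = lam t • v') := by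
    have hμt : ∀ t : ↥(Tsub p), μ t = (μ t₀ * ((χ t₀ : F))⁻¹) * (lam t - (χ t : F)) := by
      intro t
      field_simp
      linear_combination hrel t
    refine ⟨v + (μ t₀ * ((χ t₀ : F))⁻¹) • w₀, ?_, ?_⟩
    · intro x
      rw [_root_.map_add, LinearMap.map_smul, hvx x, hw₀fix x]
      abel
    · intro t
      rw [_root_.map_add, hμ t, LinearMap.map_smul, hχ t w₀ w₀mem, hμt t]
      module
  -- the tensor representation
  set J := Representation.invariants ((symTensor p F ρ).comp (Usub p).subtype) with hJ
  have memJ : ∀ z : (Fin 2 → F) ⊗[F] W,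
      z ∈ J ↔ ∀ x : ℤ_[p], symTensor p F ρ (uB p x) z = z := by
    intro z
    constructor
    · intro hz x
      exact hz ⟨uB p x, uB_mem p x⟩
    · intro hz g
      show symTensor p F ρ ((g : ↥(Bsub p))) z = z
      rw [usub_eq p g]
      exact hz _
  have hact : ∀ (x : ℤ_[p]) (z0 z1 : W),
      symTensor p F ρ (uB p x) (E F 0 ⊗ₜ[F] z0 + E F 1 ⊗ₜ[F] z1)
      = E F 0 ⊗ₜ[F] (ρ (uB p x) z0 + red p F x • ρ (uB p x) z1)
        + E F 1 ⊗ₜ[F] (ρ (uB p x) z1) := by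
    intro x z0 z1
    rw [_root_.map_add, symTensor_tmul, symTensor_tmul,
      show ((uB p x : ↥(Bsub p)) : GL2 p) = uMat p x from rfl,
      sym1_u_E0, sym1_u_E1, TensorProduct.add_tmul, ← TensorProduct.smul_tmul',
      TensorProduct.tmul_add, TensorProduct.tmul_smul]
    abel
  have hv₁J : (E F 0 ⊗ₜ[F] w₀ : (Fin 2 → F) ⊗[F] W) ∈ J := by
    rw [memJ]
    intro x
    rw [symTensor_tmul, show ((uB p x : ↥(Bsub p)) : GL2 p) = uMat p x from rfl,
      sym1_u_E0, hw₀fix x]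
  have hv₂J : (E F 0 ⊗ₜ[F] v' + E F 1 ⊗ₜ[F] w₀ : (Fin 2 → F) ⊗[F] W) ∈ J := by
    rw [memJ]
    intro x
    rw [hact x v' w₀, hv'x x, hw₀fix x, sub_add_cancel]
  have hspan2 : J = Submodule.span F {(E F 0 ⊗ₜ[F] w₀ : (Fin 2 → F) ⊗[F] W),
      E F 0 ⊗ₜ[F] v' + E F 1 ⊗ₜ[F] w₀} := by
    apply le_antisymm
    · intro u hu
      have hux : ∀ x : ℤ_[p], symTensor p F ρ (uB p x) u = u := (memJ u).mp hu
      have hdecomp := sum_proj F u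
      have hkey : ∀ x : ℤ_[p],
          E F 0 ⊗ₜ[F] (ρ (uB p x) (proj F 0 u) + red p F x • ρ (uB p x) (proj F 1 u))
          + E F 1 ⊗ₜ[F] (ρ (uB p x) (proj F 1 u))
          = E F 0 ⊗ₜ[F] (proj F 0 u) + E F 1 ⊗ₜ[F] (proj F 1 u) := by
        intro x
        rw [← hact, hdecomp]
        exact hux x
      have h1fix : ∀ x : ℤ_[p], ρ (uB p x) (proj F 1 u) = proj F 1 u := by
        intro x
        have h := congrArg (proj F 1) (hkey x)
        simpa using h
      have h0eq : ∀ x : ℤ_[p],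
          ρ (uB p x) (proj F 0 u) = proj F 0 u - red p F x • proj F 1 u := by
        intro x
        have h := congrArg (proj F 0) (hkey x)
        simp only [_root_.map_add, proj00, proj01, LinearMap.map_smul, h1fix x] at h
        linear_combination (norm := module) h
      obtain ⟨cc, hcc⟩ := hgenW _ ((memI _).mpr h1fix)
      have hyI : proj F 0 u - cc • v' ∈ I := by
        rw [memI]
        intro x
        rw [_root_.map_sub, LinearMap.map_smul, h0eq x, hv'x x, hcc]
        module
      obtain ⟨cc', hcc'⟩ := hgenW _ hyI
      rw [Submodule.mem_span_pair]
      refine ⟨cc', cc, ?_⟩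
      rw [← hdecomp, hcc,
        show proj F 0 u = cc' • w₀ + cc • v' from by rw [← hcc']; abel,
        TensorProduct.tmul_add, TensorProduct.tmul_smul, TensorProduct.tmul_smul,
        TensorProduct.tmul_smul, smul_add]
      abel
    · rw [Submodule.span_le]
      rintro y hy
      rcases Set.mem_insert_iff.mp hy with rfl | hy'
      · exact hv₁J
      · rcases Set.mem_singleton_iff.mp hy' with rfl
        exact hv₂J
  have hindep : LinearIndependent F
      ![(E F 0 ⊗ₜ[F] w₀ : (Fin 2 → F) ⊗[F] W), E F 0 ⊗ₜ[F] v' + E F 1 ⊗ₜ[F] w₀] := by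
    rw [LinearIndependent.pair_iff]
    intro s' t' hst
    have h1 := congrArg (proj F 1) hst
    simp only [_root_.map_add, LinearMap.map_smul, proj10, proj11, smul_zero,
      zero_add, _root_.map_zero] at h1
    have ht' : t' = 0 := by
      rcases smul_eq_zero.mp h1 with h | h
      · exact h
      · exact absurd h hw₀ne
    have h0 := congrArg (proj F 0) hst
    simp only [_root_.map_add, LinearMap.map_smul, proj00, proj01, add_zero,
      _root_.map_zero, ht', zero_smul] at h0
    have hs' : s' = 0 := by
      rcases smul_eq_zero.mp (by simpa using h0 : s' • w₀ = 0) with h | h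
      · exact h
      · exact absurd h hw₀ne
    exact ⟨hs', ht'⟩
  constructor
  · rw [hspan2]
    have hrange : Set.range
        ![(E F 0 ⊗ₜ[F] w₀ : (Fin 2 → F) ⊗[F] W), E F 0 ⊗ₜ[F] v' + E F 1 ⊗ₜ[F] w₀]
        = {(E F 0 ⊗ₜ[F] w₀ : (Fin 2 → F) ⊗[F] W), E F 0 ⊗ₜ[F] v' + E F 1 ⊗ₜ[F] w₀} := by
      ext y
      simp only [Set.mem_range, Fin.exists_fin_two, Matrix.cons_val_zero,
        Matrix.cons_val_one, Matrix.head_cons, Set.mem_insert_iff,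
        Set.mem_singleton_iff, eq_comm]
      all_goals tauto
    rw [← hrange, finrank_span_eq_card hindep]
    simp
  refine ⟨E F 0 ⊗ₜ[F] w₀, E F 0 ⊗ₜ[F] v' + E F 1 ⊗ₜ[F] w₀, hv₁J, hv₂J, ?_, ?_, hspan2, ?_, ?_⟩
  · intro h
    exact hw₀ne (by simpa using congrArg (proj F 0) h)
  · intro h
    exact hw₀ne (by simpa using congrArg (proj F 1) h)
  · intro t
    rw [symTensor_tmul, sym1_t_E0, hχ t w₀ w₀mem, S4aux.smulE_tmul_smul]
  · intro t
    have hra : red p F (tentry p t 0 0) ≠ 0 :=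
      red_ne_zero_of_isUnit p F _ (isUnit_t00 p t)
    have hcoef : lam t * red p F (tentry p t 0 0)
        = (χ t : F) * red p F (tentry p t 1 1) := by
      rw [hlam]
      field_simp <;> ring
    rw [_root_.map_add, symTensor_tmul, symTensor_tmul, sym1_t_E0, sym1_t_E1,
      hv'T t, hχ t w₀ w₀mem, S4aux.smulE_tmul_smul, S4aux.smulE_tmul_smul, hcoef, ← smul_add]
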